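/- Let n ≥ 2 and let π be the non-crossing partition of [n] whose only non-singleton block is {1,2,…,n−1}. Then π is a left-modular element of the lattice NC_n of non-crossing partitions of [n]. -/

import Mathlib

/-- A partition (equivalence relation) of `Fin n` is non-crossing if there are no
`i < j < k < l` with `i ∼ k`, `j ∼ l` but `i ≁ j`. -/
def Noncrossing {n : ℕ} (s : Setoid (Fin n)) : Prop :=
  ¬ ∃ i j k l : Fin n, i < j ∧ j < k ∧ k < l ∧ s.r i k ∧ s.r j l ∧ ¬ s.r i j

/-- The lattice `NC n` of non-crossing partitions of `{1,…,n}` (modelled on `Fin n`),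
ordered by refinement (the order inherited from the lattice of all partitions). -/
def NC (n : ℕ) := {s : Setoid (Fin n) // Noncrossing s}

instance (n : ℕ) : PartialOrder (NC n) :=
  inferInstanceAs (PartialOrder {s : Setoid (Fin n) // Noncrossing s})

/-- The partition of `{1,…,n}` whose only non-singleton block is `{1,…,n−1}`
(in `Fin n`: the block of all elements with value `< n - 1`). -/
def ncPiRel (n : ℕ) : Setoid (Fin n) :=
  ⟨fun i j => (i : ℕ) = j ∨ ((i : ℕ) < n - 1 ∧ (j : ℕ) < n - 1),
   ⟨fun i => Or.inl rfl, fun h => by omega, fun h1 h2 => by omega⟩⟩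

theorem ncPiRel_noncrossing (n : ℕ) : Noncrossing (ncPiRel n) := by
  rintro ⟨i, j, k, l, hij, hjk, hkl, hik, hjl, hnij⟩
  simp only [Fin.lt_def] at hij hjk hkl
  have hik' : (i : ℕ) = k ∨ ((i : ℕ) < n - 1 ∧ (k : ℕ) < n - 1) := hik
  have hjl' : (j : ℕ) = l ∨ ((j : ℕ) < n - 1 ∧ (l : ℕ) < n - 1) := hjl
  have hnij' : ¬ ((i : ℕ) = j ∨ ((i : ℕ) < n - 1 ∧ (j : ℕ) < n - 1)) := hnij
  omega

/-- `π = 12⋯(n−1)` as an element of `NC n`. -/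
def ncPi (n : ℕ) : NC n := ⟨ncPiRel n, ncPiRel_noncrossing n⟩

/-- The meet (intersection) of `ncPiRel n` with another setoid. -/
def ncMeetRel (n : ℕ) (t : Setoid (Fin n)) : Setoid (Fin n) :=
  ⟨fun i j => (ncPiRel n).r i j ∧ t.r i j,
   ⟨fun i => ⟨(ncPiRel n).iseqv.refl i, t.iseqv.refl i⟩,
    fun h => ⟨(ncPiRel n).iseqv.symm h.1, t.iseqv.symm h.2⟩,
    fun h1 h2 => ⟨(ncPiRel n).iseqv.trans h1.1 h2.1, t.iseqv.trans h1.2 h2.2⟩⟩⟩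

theorem ncMeetRel_noncrossing (n : ℕ) (y : NC n) :
    Noncrossing (ncMeetRel n y.1) := by
  rintro ⟨i, j, k, l, hij, hjk, hkl, ⟨hik1, hik2⟩, ⟨hjl1, hjl2⟩, hnij⟩
  apply hnij
  constructor
  · simp only [Fin.lt_def] at hij hjk hkl
    have hik1' : (i : ℕ) = k ∨ ((i : ℕ) < n - 1 ∧ (k : ℕ) < n - 1) := hik1
    have hjl1' : (j : ℕ) = l ∨ ((j : ℕ) < n - 1 ∧ (l : ℕ) < n - 1) := hjl1
    show (i : ℕ) = j ∨ ((i : ℕ) < n - 1 ∧ (j : ℕ) < n - 1)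
    omega
  · by_contra hy
    exact y.2 ⟨i, j, k, l, hij, hjk, hkl, hik2, hjl2, hy⟩

/-- The meet as an element of `NC n`. -/
def ncMeet (n : ℕ) (y : NC n) : NC n := ⟨ncMeetRel n y.1, ncMeetRel_noncrossing n y⟩

theorem ncMeet_isGLB (n : ℕ) (y : NC n) : IsGLB {ncPi n, y} (ncMeet n y) := by
  constructor
  · rintro w hw
    rcases hw with rfl | hw
    · exact fun {a b} h => h.1
    · rcases Set.mem_singleton_iff.mp hw with rfl
      exact fun {a b} h => h.2
  · intro w hw
    have h1 : w ≤ ncPi n := hw (Set.mem_insert _ _)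
    have h2 : w ≤ y := hw (Set.mem_insert_iff.mpr (Or.inr rfl))
    exact fun {a b} h => ⟨h1 h, h2 h⟩

theorem ncPi_leftModular (n : ℕ) (hn : 2 ≤ n)
    (inf sup : NC n → NC n → NC n)
    (hinf : ∀ a b : NC n, IsGLB {a, b} (inf a b))
    (hsup : ∀ a b : NC n, IsLUB {a, b} (sup a b)) :
    ∀ z y : NC n, z < y → sup z (inf (ncPi n) y) = inf (sup z (ncPi n)) y := by
  intro z y hzy
  have hzley : z ≤ y := le_of_lt hzy
  set π := ncPi n with hπdef
  have ha := hsup z (inf π y)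
  have hb := hinf (sup z π) y
  have hc := hinf π y
  have hd := hsup z π
  have hzd : z ≤ sup z π := hd.1 (Set.mem_insert _ _)
  have hπd : π ≤ sup z π := hd.1 (Set.mem_insert_iff.mpr (Or.inr rfl))
  have hcπ : inf π y ≤ π := hc.1 (Set.mem_insert _ _)
  have hcy : inf π y ≤ y := hc.1 (Set.mem_insert_iff.mpr (Or.inr rfl))
  have hby : inf (sup z π) y ≤ y := hb.1 (Set.mem_insert_iff.mpr (Or.inr rfl))
  have hza : z ≤ sup z (inf π y) := ha.1 (Set.mem_insert _ _)
  have hca : inf π y ≤ sup z (inf π y) := ha.1 (Set.mem_insert_iff.mpr (Or.inr rfl))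
  -- inf π y is the intersection
  have hmeet : inf π y = ncMeet n y := hc.unique (ncMeet_isGLB n y)
  apply le_antisymm
  · -- a ≤ b
    apply ha.2
    rintro w hw
    rcases hw with rfl | hw
    · exact hb.2 (by
        rintro u hu
        rcases hu with rfl | hu
        · exact hzd
        · rcases Set.mem_singleton_iff.mp hu with rfl
          exact hzley)
    · rcases Set.mem_singleton_iff.mp hw with rfl
      exact hb.2 (by
        rintro u hu
        rcases hu with rfl | hu
        · exact hcπ.trans hπd
        · rcases Set.mem_singleton_iff.mp hu with rfl
          exact hcy)
  · -- b ≤ a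
    by_cases hzπ : z ≤ π
    · -- then sup z π = π
      have hsupeq : sup z π = π := hd.unique ⟨by
          rintro u hu
          rcases hu with rfl | hu
          · exact hzπ
          · rcases Set.mem_singleton_iff.mp hu with rfl
            exact le_refl _,
        fun w hw => hw (Set.mem_insert_iff.mpr (Or.inr rfl))⟩
      rw [hsupeq]
      exact hca
    · -- z has a relation with the last element
      obtain ⟨u, v, huv, hnuv⟩ : ∃ u v : Fin n, z.1.r u v ∧ ¬ π.1.r u v := by
        by_contra h
        push_neg at h
        exact hzπ fun {a b} hab => h a b hab
      replace hnuv : ¬ ((u : ℕ) = v ∨ ((u : ℕ) < n - 1 ∧ (v : ℕ) < n - 1)) := hnuv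
      push_neg at hnuv
      -- one of u, v has value n - 1
      have huvvals : (u : ℕ) < n ∧ (v : ℕ) < n := ⟨u.isLt, v.isLt⟩
      obtain ⟨p, q, hpq, hp, hq⟩ :
          ∃ p q : Fin n, z.1.r p q ∧ (p : ℕ) < n - 1 ∧ (q : ℕ) = n - 1 := by
        rcases Nat.lt_or_ge (u : ℕ) (n - 1) with hu | hu
        · exact ⟨u, v, huv, hu, by omega⟩
        · exact ⟨v, u, z.1.iseqv.symm huv, by omega, by omega⟩
      -- key: y ≤ sup z (inf π y)
      have hya : y ≤ sup z (inf π y) := by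
        have hca2 : ncMeet n y ≤ sup z (inf π y) := by rw [← hmeet]; exact hca
        have key : ∀ i : Fin n, (i : ℕ) < n - 1 → y.1.r i q →
            (sup z (inf π y)).1.r i q := by
          intro i hi hiq
          by_cases hip : (i : ℕ) = (p : ℕ)
          · have : i = p := Fin.ext hip
            subst this
            exact hza hpq
          · have hyiq : y.1.r i q := hiq
            have hypq : y.1.r p q := hzley hpq
            have hyip : y.1.r i p := y.1.iseqv.trans hyiq (y.1.iseqv.symm hypq)
            have hmip : (ncMeet n y).1.r i p := ⟨Or.inr ⟨hi, hp⟩, hyip⟩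
            exact (sup z (inf π y)).1.iseqv.trans (hca2 hmip) (hza hpq)
        intro i j hyij
        by_cases hij : (i : ℕ) = (j : ℕ)
        · have : i = j := Fin.ext hij
          subst this
          exact (sup z (inf π y)).1.iseqv.refl i
        · have hi' : (i : ℕ) < n := i.isLt
          have hj' : (j : ℕ) < n := j.isLt
          by_cases hi : (i : ℕ) < n - 1
          · by_cases hj : (j : ℕ) < n - 1
            · exact hca2 ⟨Or.inr ⟨hi, hj⟩, hyij⟩
            · have hjq : j = q := Fin.ext (by omega)
              subst hjq
              exact key i hi hyij
          · have hiq : i = q := Fin.ext (by omega)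
            have hj : (j : ℕ) < n - 1 := by omega
            subst hiq
            exact (sup z (inf π y)).1.iseqv.symm (key j hj (y.1.iseqv.symm hyij))
      exact hby.trans hya
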